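/- For any real constants a₁, a₂, the function h : ℝ² → ℝ defined by h(u,v) = a₁ − (a₂ + a₁(u−1)) tanh(u) satisfies the Helmholtz equation Δh + ( 8 e^{2u} / (1 + e^{2u})² ) h = 0, where Δh = h_{,11} + h_{,22}. -/

import Mathlib

open Complex

noncomputable section

/-- Euclidean inner product on ℂ ≅ ℝ²: ⟨w₁,w₂⟩ = Re(w̄₁ w₂). -/
def inn (w₁ w₂ : ℂ) : ℝ := ((starRingEnd ℂ) w₁ * w₂).re

/-- Partial derivative in u (z = u + iv). -/
def pd1 (f : ℂ → ℝ) (z : ℂ) : ℝ := fderiv ℝ f z 1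
/-- Partial derivative in v (z = u + iv). -/
def pd2 (f : ℂ → ℝ) (z : ℂ) : ℝ := fderiv ℝ f z Complex.I
/-- Euclidean Laplacian Δf = f_{,11} + f_{,22}. -/
def lap (f : ℂ → ℝ) (z : ℂ) : ℝ := pd1 (pd1 f) z + pd2 (pd2 f) z

/-- Partial derivative in u of an ℝ³ ≅ ℂ × ℝ valued map. -/
def pdv1 (f : ℂ → ℂ × ℝ) (z : ℂ) : ℂ × ℝ := fderiv ℝ f z 1
/-- Partial derivative in v of an ℝ³ ≅ ℂ × ℝ valued map. -/
def pdv2 (f : ℂ → ℂ × ℝ) (z : ℂ) : ℂ × ℝ := fderiv ℝ f z Complex.I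
/-- Euclidean inner product on ℝ³ ≅ ℂ × ℝ. -/
def inn3 (p q : ℂ × ℝ) : ℝ := inn p.1 q.1 + p.2 * q.2

lemma pd1_comp_re (H : ℝ → ℝ) (d : ℝ) (z : ℂ) (hd : HasDerivAt H d z.re) :
    pd1 (fun w => H w.re) z = d := by
  have h1 : HasFDerivAt (fun w : ℂ => H w.re)
      ((ContinuousLinearMap.smulRight (1 : ℝ →L[ℝ] ℝ) d).comp Complex.reCLM) z :=
    hd.hasFDerivAt.comp z Complex.reCLM.hasFDerivAt
  rw [pd1, h1.fderiv]
  simp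

lemma pd2_comp_re (H : ℝ → ℝ) (d : ℝ) (z : ℂ) (hd : HasDerivAt H d z.re) :
    pd2 (fun w => H w.re) z = 0 := by
  have h1 : HasFDerivAt (fun w : ℂ => H w.re)
      ((ContinuousLinearMap.smulRight (1 : ℝ →L[ℝ] ℝ) d).comp Complex.reCLM) z :=
    hd.hasFDerivAt.comp z Complex.reCLM.hasFDerivAt
  rw [pd2, h1.fderiv]
  simp

lemma tanh_hasDerivAt (x : ℝ) : HasDerivAt Real.tanh (1 / Real.cosh x ^ 2) x := by
  have hc : Real.cosh x ≠ 0 := (Real.cosh_pos x).ne'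
  have h := (Real.hasDerivAt_sinh x).div (Real.hasDerivAt_cosh x) hc
  have hfun : Real.tanh = fun t => Real.sinh t / Real.cosh t := by
    funext t; exact Real.tanh_eq_sinh_div_cosh t
  rw [hfun]
  refine h.congr_deriv ?_
  have hsq := Real.cosh_sq_sub_sinh_sq x
  field_simp
  nlinarith [hsq]

/-- h(u,v) = a₁ − (a₂ + a₁(u−1)) tanh u solves
Δh + (8 e^{2u}/(1+e^{2u})²) h = 0. -/
theorem stmt_8 (a₁ a₂ : ℝ) :
    let h : ℂ → ℝ := fun z => a₁ - (a₂ + a₁ * (z.re - 1)) * Real.tanh z.re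
    ∀ z : ℂ,
      lap h z + (8 * Real.exp (2 * z.re) / (1 + Real.exp (2 * z.re)) ^ 2) * h z = 0 := by
  intro h z
  set H : ℝ → ℝ := fun t => a₁ - (a₂ + a₁ * (t - 1)) * Real.tanh t with hHdef
  set D1 : ℝ → ℝ := fun t =>
    -(a₁ * Real.tanh t) - (a₂ + a₁ * (t - 1)) / Real.cosh t ^ 2 with hD1def
  set D2 : ℝ → ℝ := fun t =>
    -(2 * a₁) / Real.cosh t ^ 2
      + 2 * (a₂ + a₁ * (t - 1)) * Real.sinh t / Real.cosh t ^ 3 with hD2def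
  have hp : ∀ x : ℝ, HasDerivAt (fun t : ℝ => a₂ + a₁ * (t - 1)) a₁ x := by
    intro x
    simpa using (((hasDerivAt_id x).sub_const 1).const_mul a₁).const_add a₂
  have hH : ∀ x : ℝ, HasDerivAt H (D1 x) x := by
    intro x
    have hc : Real.cosh x ≠ 0 := (Real.cosh_pos x).ne'
    have h1 := ((hp x).mul (tanh_hasDerivAt x)).const_sub a₁
    refine h1.congr_deriv ?_
    simp only [hD1def]
    field_simp
    ring
  have hD1 : ∀ x : ℝ, HasDerivAt D1 (D2 x) x := by
    intro x
    have hc : Real.cosh x ≠ 0 := (Real.cosh_pos x).ne'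
    have hc2 : Real.cosh x ^ 2 ≠ 0 := pow_ne_zero 2 hc
    have ha : HasDerivAt (fun t : ℝ => -(a₁ * Real.tanh t))
        (-(a₁ * (1 / Real.cosh x ^ 2))) x := ((tanh_hasDerivAt x).const_mul a₁).neg
    have hcsq : HasDerivAt (fun t : ℝ => Real.cosh t ^ 2)
        (2 * Real.cosh x ^ 1 * Real.sinh x) x := by
      simpa using (Real.hasDerivAt_cosh x).fun_pow 2
    have hb := (hp x).div hcsq hc2
    have hsum := ha.sub hb
    refine hsum.congr_deriv ?_
    simp only [hD2def, pow_one]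
    field_simp
    ring
  have e1 : pd1 h = fun w => D1 w.re := funext fun w => pd1_comp_re H (D1 w.re) w (hH w.re)
  have e2 : pd1 (pd1 h) z = D2 z.re := by
    rw [e1]; exact pd1_comp_re D1 (D2 z.re) z (hD1 z.re)
  have e3 : pd2 h = fun _ => (0 : ℝ) := funext fun w => pd2_comp_re H (D1 w.re) w (hH w.re)
  have e4 : pd2 (pd2 h) z = 0 := by
    rw [e3]; simp [pd2]
  have hlap : lap h z = D2 z.re := by rw [lap, e2, e4, add_zero]
  rw [hlap]
  set u := z.re with hu
  have hc : Real.cosh u ≠ 0 := (Real.cosh_pos u).ne'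
  have hexp : Real.exp u ≠ 0 := Real.exp_ne_zero u
  have hC : 8 * Real.exp (2 * u) / (1 + Real.exp (2 * u)) ^ 2 = 2 / Real.cosh u ^ 2 := by
    have h2 : Real.exp (2 * u) = Real.exp u * Real.exp u := by
      rw [two_mul, Real.exp_add]
    have hcosh : Real.cosh u = (Real.exp u + Real.exp (-u)) / 2 := Real.cosh_eq u
    have hne : Real.exp (-u) = (Real.exp u)⁻¹ := Real.exp_neg u
    have hpos : (1 + Real.exp (2 * u)) ≠ 0 := by positivity
    rw [h2, hcosh, hne]
    field_simp
    ring
  rw [hC]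
  have htanh : Real.tanh u = Real.sinh u / Real.cosh u := Real.tanh_eq_sinh_div_cosh u
  show D2 u + 2 / Real.cosh u ^ 2 * H u = 0
  simp only [hD2def, hHdef, htanh]
  field_simp
  ring
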